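/- Let 1 < p ≤ 2, λ > 0, v ∈ ℝ^d, and let w* be a global minimizer of w ↦ (1/2)‖w − v‖_2^2 + λ‖w‖_p^p. Then for every coordinate j, |w*_j| ≤ min{|v_j|, (|v_j|/(λp))^{1/(p−1)}}. -/
import Mathlib

open Filter Topology

/-- Let `1 < p ≤ 2`, `λ > 0`, `v ∈ ℝ^d`, and let `w*` be a global minimizer of
`w ↦ (1/2)‖w − v‖₂² + λ‖w‖_p^p`. Then for every coordinate `j`,
`|w*_j| ≤ min {|v_j|, (|v_j|/(λp))^(1/(p−1))}`. -/
theorem stmt_5 (d : ℕ) (p lam : ℝ) (hp1 : 1 < p) (hp2 : p ≤ 2) (hlam : 0 < lam)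
    (v wstar : Fin d → ℝ)
    (hmin : ∀ w : Fin d → ℝ,
      (1 / 2) * ∑ j, (wstar j - v j) ^ 2 + lam * ∑ j, |wstar j| ^ p
        ≤ (1 / 2) * ∑ j, (w j - v j) ^ 2 + lam * ∑ j, |w j| ^ p) :
    ∀ j, |wstar j| ≤ min (|v j|) ((|v j| / (lam * p)) ^ (1 / (p - 1))) := by
  intro j
  set t := wstar j with ht
  set a := v j with ha
  have hp0 : (0:ℝ) < p := lt_trans one_pos hp1
  -- one-dimensional minimality
  have onedim : ∀ s : ℝ, (1/2) * (t - a)^2 + lam * |t| ^ p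
      ≤ (1/2) * (s - a)^2 + lam * |s| ^ p := by
    intro s
    have h := hmin (Function.update wstar j s)
    have e1 : ∑ i, (Function.update wstar j s i - v i)^2
        = (s - a)^2 + ∑ i ∈ Finset.univ.erase j, (wstar i - v i)^2 := by
      rw [← Finset.add_sum_erase _ _ (Finset.mem_univ j), Function.update_self]
      congr 1
      exact Finset.sum_congr rfl fun i hi => by
        rw [Function.update_of_ne (Finset.ne_of_mem_erase hi)]
    have e2 : ∑ i, |Function.update wstar j s i| ^ p
        = |s| ^ p + ∑ i ∈ Finset.univ.erase j, |wstar i| ^ p := by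
      rw [← Finset.add_sum_erase _ _ (Finset.mem_univ j), Function.update_self]
      congr 1
      exact Finset.sum_congr rfl fun i hi => by
        rw [Function.update_of_ne (Finset.ne_of_mem_erase hi)]
    have e3 : ∑ i, (wstar i - v i)^2
        = (t - a)^2 + ∑ i ∈ Finset.univ.erase j, (wstar i - v i)^2 :=
      (Finset.add_sum_erase _ _ (Finset.mem_univ j)).symm
    have e4 : ∑ i, |wstar i| ^ p
        = |t| ^ p + ∑ i ∈ Finset.univ.erase j, |wstar i| ^ p :=
      (Finset.add_sum_erase _ _ (Finset.mem_univ j)).symm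
    rw [e1, e2, e3, e4] at h
    nlinarith [h]
  -- first bound : |t| ≤ |a|
  have h1 : |t| ≤ |a| := by
    by_contra hc
    push_neg at hc
    have hpow : |a| ^ p < |t| ^ p := Real.rpow_lt_rpow (abs_nonneg a) hc hp0
    have := onedim a
    nlinarith [sq_nonneg (t - a), mul_lt_mul_of_pos_left hpow hlam]
  -- first-order condition via limit: lam * p * |t|^p ≤ a*t - t^2
  have hslope : Tendsto (fun c : ℝ => (c ^ p - 1) / (c - 1)) (𝓝[≠] (1:ℝ)) (𝓝 p) := by
    have h := Real.hasDerivAt_rpow_const (x := (1:ℝ)) (p := p) (Or.inl one_ne_zero)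
    have h2 := hasDerivAt_iff_tendsto_slope.mp h
    simp only [slope_fun_def, Real.one_rpow, smul_eq_mul, vsub_eq_sub, mul_one] at h2
    refine h2.congr fun c => (div_eq_inv_mul _ _).symm
  have hL : Tendsto (fun c : ℝ => lam * ((c ^ p - 1) / (c - 1)) * |t| ^ p)
      (𝓝[<] (1:ℝ)) (𝓝 (lam * p * |t| ^ p)) := by
    exact ((hslope.mono_left (nhdsWithin_mono _ fun x hx => ne_of_lt hx)).const_mul
      lam).mul_const _
  have hR : Tendsto (fun c : ℝ => (1/2) * (2*a*t - (1+c)*t^2)) (𝓝[<] (1:ℝ))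
      (𝓝 (a*t - t^2)) := by
    have hcont : Continuous (fun c : ℝ => (1/2) * (2*a*t - (1+c)*t^2)) := by continuity
    have h2 : Tendsto (fun c : ℝ => (1/2) * (2*a*t - (1+c)*t^2)) (𝓝[<] (1:ℝ))
        (𝓝 ((1/2) * (2*a*t - (1+(1:ℝ))*t^2))) :=
      (hcont.tendsto 1).mono_left nhdsWithin_le_nhds
    convert h2 using 2
    ring
  have hev : ∀ᶠ c in 𝓝[<] (1:ℝ),
      lam * ((c ^ p - 1) / (c - 1)) * |t| ^ p ≤ (1/2) * (2*a*t - (1+c)*t^2) := by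
    filter_upwards [Ioo_mem_nhdsLT_of_mem (show (1:ℝ) ∈ Set.Ioc 0 1 by constructor <;> norm_num)]
      with c hc
    obtain ⟨hc0, hc1⟩ := hc
    have h1c : (0:ℝ) < 1 - c := by linarith
    have habs : |c * t| ^ p = c ^ p * |t| ^ p := by
      rw [abs_mul, abs_of_pos hc0, Real.mul_rpow hc0.le (abs_nonneg t)]
    have basic := onedim (c * t)
    rw [habs] at basic
    have hne1 : c - 1 ≠ 0 := by linarith
    have hne2 : 1 - c ≠ 0 := by linarith
    rw [show lam * ((c ^ p - 1) / (c - 1)) * |t| ^ p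
        = (lam * (1 - c ^ p) * |t| ^ p) / (1 - c) by field_simp; ring, div_le_iff₀ h1c]
    nlinarith [basic]
  have key : lam * p * |t| ^ p ≤ a * t - t ^ 2 := le_of_tendsto_of_tendsto hL hR hev
  -- second bound
  refine le_min h1 ?_
  rcases eq_or_ne t 0 with h0 | h0
  · rw [h0, abs_zero]
    positivity
  · have htpos : 0 < |t| := abs_pos.2 h0
    have hsplit : |t| ^ p = |t| ^ (p - 1) * |t| := by
      have h := Real.rpow_add htpos (p - 1) 1
      rw [Real.rpow_one] at h
      rw [← h]; norm_num
    have hat : a * t - t ^ 2 ≤ |a| * |t| := by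
      have : a * t ≤ |a * t| := le_abs_self _
      rw [abs_mul] at this
      nlinarith [sq_nonneg t]
    have hmul : lam * p * |t| ^ (p - 1) * |t| ≤ |a| * |t| := by
      calc lam * p * |t| ^ (p - 1) * |t| = lam * p * |t| ^ p := by rw [hsplit]; ring
        _ ≤ a * t - t ^ 2 := key
        _ ≤ |a| * |t| := hat
    have hfo : lam * p * |t| ^ (p - 1) ≤ |a| := le_of_mul_le_mul_right hmul htpos
    have hlp : (0:ℝ) < lam * p := by positivity
    have hle : |t| ^ (p - 1) ≤ |a| / (lam * p) := by
      rw [le_div_iff₀ hlp]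
      linarith [hfo, mul_comm (|t| ^ (p - 1)) (lam * p)]
    have hexp : (0:ℝ) ≤ 1 / (p - 1) := by
      have : (0:ℝ) < p - 1 := by linarith
      positivity
    have := Real.rpow_le_rpow (Real.rpow_nonneg (abs_nonneg t) _) hle hexp
    calc |t| = (|t| ^ (p - 1)) ^ (1 / (p - 1)) := by
          rw [← Real.rpow_mul (abs_nonneg t),
            mul_one_div_cancel (by linarith : p - 1 ≠ 0), Real.rpow_one]
      _ ≤ (|a| / (lam * p)) ^ (1 / (p - 1)) := this
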